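/- Fix a > 1, k > 0, n ≥ 2, and define P by p₁ = (a-1)/a, pᵢ = (a-1)/aⁱ (2 ≤ i ≤ n-1), pₙ = 1/a^{n-1}, and Q by qᵢ = pᵢ/2^{k a^{i-1}} for i ≥ 2, q₁ = 1 - Σ_{i=2}^n qᵢ. Then S(P|Q) > -1 + (n-2)·k(a-1)/a + k = k(n-1) - k(n-2)/a - 1. -/

import Mathlib

open Finset

lemma xlogx_ge (x : ℝ) (hx : 0 < x) : -2⁻¹ ≤ x * Real.log x := by
  have he : (2:ℝ) ≤ Real.exp 1 := by
    have := Real.add_one_le_exp 1; linarith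
  have hxe : 0 < x * Real.exp 1 := by positivity
  have h1 : Real.log (1 / (x * Real.exp 1)) ≤ 1 / (x * Real.exp 1) - 1 :=
    Real.log_le_sub_one_of_pos (by positivity)
  rw [Real.log_div one_ne_zero (ne_of_gt hxe), Real.log_one,
    Real.log_mul (ne_of_gt hx) (Real.exp_pos 1).ne', Real.log_exp] at h1
  have h2 : -(1 / (x * Real.exp 1)) ≤ Real.log x := by linarith
  have h3 : -(1 / Real.exp 1) ≤ x * Real.log x := by
    have h4 := mul_le_mul_of_nonneg_left h2 hx.le
    have h5 : x * (-(1 / (x * Real.exp 1))) = -(1 / Real.exp 1) := by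
      field_simp
    linarith [h4, h5.le, h5.ge]
  have h6 : 1 / Real.exp 1 ≤ 2⁻¹ := by
    rw [div_le_iff₀ (Real.exp_pos 1)]
    nlinarith [Real.exp_pos 1]
  linarith


/-- For the explicit distributions `p₁ = (a-1)/a`, `pᵢ = (a-1)/aⁱ`
(`2 ≤ i ≤ n-1`), `pₙ = 1/a^(n-1)`, and `qᵢ = pᵢ / 2^(k·a^(i-1))` for `i ≥ 2`,
`q₁ = 1 - ∑_{i≥2} qᵢ` (paper index `i = i.val + 1` for `i : Fin n`), the
relative entropy satisfies `S(P|Q) > -1 + (n-2)·k(a-1)/a + k`, and this lower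
bound equals `k(n-1) - k(n-2)/a - 1`. -/
theorem stmt7 (a : ℝ) (ha : 1 < a) (k : ℝ) (hk : 0 < k) (n : ℕ) (hn : 2 ≤ n)
    (p q : Fin n → ℝ)
    (hp1 : p ⟨0, by omega⟩ = (a - 1) / a)
    (hpmid : ∀ i : Fin n, 2 ≤ i.val + 1 → i.val + 1 ≤ n - 1 →
      p i = (a - 1) / a ^ (i.val + 1))
    (hpn : p ⟨n - 1, by omega⟩ = 1 / a ^ (n - 1))
    (hq : ∀ i : Fin n, 2 ≤ i.val + 1 → q i = p i / (2 : ℝ) ^ (k * a ^ i.val))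
    (hq1 : q ⟨0, by omega⟩ = 1 - ∑ i ∈ univ.filter (fun i : Fin n => 2 ≤ i.val + 1), q i) :
    (∑ i, p i * Real.logb 2 (p i / q i)) >
        -1 + ((n : ℝ) - 2) * (k * (a - 1) / a) + k ∧
      -1 + ((n : ℝ) - 2) * (k * (a - 1) / a) + k =
        k * ((n : ℝ) - 1) - k * ((n : ℝ) - 2) / a - 1 := by
  have ha0 : 0 < a := lt_trans one_pos ha
  constructor
  swap
  · field_simp
    ring
  obtain ⟨m, rfl⟩ : ∃ m, n = m + 2 := ⟨n - 2, by omega⟩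
  have hlog2 : 0 < Real.log 2 := Real.log_pos one_lt_two
  have hp0 : p 0 = (a - 1) / a := by
    have : (0 : Fin (m + 2)) = ⟨0, by omega⟩ := by simp [Fin.ext_iff]
    rw [this]; exact hp1
  -- p at successor indices
  have hpsucc : ∀ i : Fin (m+1), p i.succ =
      if i.val = m then 1 / a ^ (m+1) else (a-1) / a ^ (i.val + 2) := by
    intro i
    by_cases h : i.val = m
    · have hi : i.succ = ⟨m + 2 - 1, by omega⟩ := by simp [Fin.ext_iff, h]
      rw [hi, if_pos h, hpn]
      norm_num
    · have hlt : i.val < m := lt_of_le_of_ne (by omega) h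
      have := hpmid i.succ (by simp [Fin.val_succ]) (by simp [Fin.val_succ]; omega)
      rw [if_neg h, this]
      congr 1
  have hppos : ∀ i : Fin (m+1), 0 < p i.succ := by
    intro i
    rw [hpsucc i]
    split
    · positivity
    · have : 0 < a - 1 := by linarith
      positivity
  have hqsucc : ∀ i : Fin (m+1), q i.succ = p i.succ / (2:ℝ) ^ (k * a ^ (i.val + 1)) := by
    intro i
    have := hq i.succ (by simp [Fin.val_succ])
    rw [this]
    congr 2
  have hqpos : ∀ i : Fin (m+1), 0 < q i.succ := by
    intro i
    rw [hqsucc i]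
    exact div_pos (hppos i) (Real.rpow_pos_of_pos two_pos _)
  have hqlt : ∀ i : Fin (m+1), q i.succ < p i.succ := by
    intro i
    rw [hqsucc i]
    apply div_lt_self (hppos i)
    rw [Real.one_lt_rpow_iff_of_pos two_pos]
    left
    exact ⟨one_lt_two, by positivity⟩
  -- sum of p over successors
  have hPsum : ∑ i : Fin (m+1), p i.succ = 1 / a := by
    have hrw : ∑ i : Fin (m+1), p i.succ
        = ∑ i ∈ Finset.range (m+1),
            (if i = m then 1 / a ^ (m+1) else (a-1) / a ^ (i + 2)) := by
      rw [Finset.sum_range]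
      exact Finset.sum_congr rfl fun i _ => hpsucc i
    rw [hrw, Finset.sum_range_succ, if_pos rfl]
    have hmid : ∀ i ∈ Finset.range m,
        (if i = m then 1 / a ^ (m+1) else (a-1) / a ^ (i + 2))
          = 1 / a ^ (i+1) - 1 / a ^ (i+2) := by
      intro i hi
      rw [Finset.mem_range] at hi
      rw [if_neg (by omega)]
      field_simp
      ring
    rw [Finset.sum_congr rfl hmid, Finset.sum_range_sub' (fun i => 1 / a ^ (i+1))]
    field_simp
    ring
  -- the filter sum
  have hfilter : univ.filter (fun i : Fin (m+2) => 2 ≤ i.val + 1) = univ.erase 0 := by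
    ext i
    simp only [Finset.mem_filter, Finset.mem_erase, Finset.mem_univ, true_and, and_true, ne_eq,
      Fin.ext_iff, Fin.val_zero]
    omega
  have hq0 : q 0 = 1 - ∑ i : Fin (m+1), q i.succ := by
    have h0 : (0 : Fin (m + 2)) = ⟨0, by omega⟩ := by simp [Fin.ext_iff]
    rw [← h0] at hq1
    rw [hq1, hfilter, Finset.sum_erase_eq_sub (Finset.mem_univ 0), Fin.sum_univ_succ]
    ring
  have hTle : ∑ i : Fin (m+1), q i.succ < 1 / a := by
    rw [← hPsum]
    exact Finset.sum_lt_sum_of_nonempty Finset.univ_nonempty fun i _ => hqlt i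
  have hTnn : 0 ≤ ∑ i : Fin (m+1), q i.succ :=
    Finset.sum_nonneg fun i _ => (hqpos i).le
  have hainv : 1 / a < 1 := by rw [div_lt_one ha0]; linarith
  have hq0pos : 0 < q 0 := by rw [hq0]; linarith
  have hq0le : q 0 ≤ 1 := by rw [hq0]; linarith
  have hp0pos : 0 < p 0 := by rw [hp0]; exact div_pos (by linarith) ha0
  -- term at 0
  have hterm0 : p 0 * Real.logb 2 (p 0 / q 0) > -1 := by
    have h1 : Real.logb 2 (p 0) ≤ Real.logb 2 (p 0 / q 0) := by
      apply Real.logb_le_logb_of_le one_lt_two hp0pos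
      rw [le_div_iff₀ hq0pos]
      nlinarith
    have h2 : -2⁻¹ ≤ p 0 * Real.log (p 0) := xlogx_ge _ hp0pos
    have hlog2half : (2:ℝ)⁻¹ < Real.log 2 := by
      have := Real.log_two_gt_d9; linarith
    have e1 : p 0 * Real.logb 2 (p 0) = p 0 * Real.log (p 0) / Real.log 2 := by
      rw [Real.logb]; ring
    have h3 : -1 < p 0 * Real.log (p 0) / Real.log 2 := by
      rw [lt_div_iff₀ hlog2]
      linarith
    have h4 := mul_le_mul_of_nonneg_left h1 hp0pos.le
    linarith
  -- the main sum
  have hsum : ∑ i : Fin (m+2), p i * Real.logb 2 (p i / q i)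
      = p 0 * Real.logb 2 (p 0 / q 0)
        + ∑ i : Fin (m+1), p i.succ * (k * a ^ (i.val + 1)) := by
    rw [Fin.sum_univ_succ]
    congr 1
    apply Finset.sum_congr rfl
    intro i _
    congr 1
    have hpq : p i.succ / q i.succ = (2:ℝ) ^ (k * a ^ (i.val + 1)) := by
      rw [hqsucc i]
      field_simp
      exact div_self (hppos i).ne'
    rw [hpq, Real.logb_rpow two_pos (by norm_num)]
  have hsum2 : ∑ i : Fin (m+1), p i.succ * (k * a ^ (i.val + 1))
      = m * (k * (a-1) / a) + k := by
    have hrw : ∑ i : Fin (m+1), p i.succ * (k * a ^ (i.val + 1))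
        = ∑ i ∈ Finset.range (m+1),
            ((if i = m then 1 / a ^ (m+1) else (a-1) / a ^ (i + 2)) * (k * a ^ (i + 1))) := by
      rw [Finset.sum_range]
      exact Finset.sum_congr rfl fun i _ => by rw [hpsucc i]
    rw [hrw, Finset.sum_range_succ, if_pos rfl]
    have hlast : 1 / a ^ (m+1) * (k * a ^ (m+1)) = k := by
      field_simp
    have hmid : ∀ i ∈ Finset.range m,
        (if i = m then 1 / a ^ (m+1) else (a-1) / a ^ (i + 2)) * (k * a ^ (i + 1))
          = k * (a-1) / a := by
      intro i hi
      rw [Finset.mem_range] at hi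
      rw [if_neg (by omega)]
      field_simp
      ring
    rw [Finset.sum_congr rfl hmid, Finset.sum_const, Finset.card_range, nsmul_eq_mul, hlast]
  have hcast : ((m + 2 : ℕ) : ℝ) - 2 = (m : ℝ) := by push_cast; ring
  rw [hsum, hsum2] at *
  rw [hcast]
  linarith
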